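/- Let F ≤ S_d be transitive, let l be a legal labelling of the d-regular tree T_d (d ≥ 3), and let b be a vertex of T_d. Set Δ := {1,…,d}, D := {1,…,d−1}, Δ_n := Δ × D^{n−1}, and let F_d be the stabilizer of d in F (acting on D after identifying {1,…,d}∖{d} with D). Define permutation groups F(n) ≤ Sym(Δ_n) inductively by F(1) := F and F(n+1) := F(n) ⋉ F_d^{Δ_n}, the permutational wreath product acting on Δ_{n+1} = Δ_n × D in which F(n) permutes the Δ_n-coordinate and the copy of F_d indexed by ω ∈ Δ_n acts on the D-coordinate over ω. Then the stabilizer of b in U^{(l)}(F), with the topology of pointwise convergence, is isomorphic as a topological group to the inverse limit lim← F(n) of the system given by the canonical projections π_n : F(n) → F(n−1). -/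

import Mathlib

/-!
STATEMENT 14.  Let F ≤ S_d be transitive, l a legal labelling of the d-regular tree T_d
(d ≥ 3), b a vertex.  With Δ_n = Δ × D^{n-1}, F(1) = F and F(n+1) = F(n) ⋉ F_d^{Δ_n} the
iterated wreath products, the stabilizer of b in U^{(l)}(F), with the topology of
pointwise convergence, is isomorphic as a topological group to the inverse limit
lim← F(n).  This is expressed by an injective continuous monoid homomorphism φ into the
product ∏ₙ Sym(Δ_n) which is an embedding with image the inverse limit.
-/

def IsTreeAut {V : Type*} (T : SimpleGraph V) (g : Equiv.Perm V) : Prop :=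
  ∀ u v : V, T.Adj (g u) (g v) ↔ T.Adj u v

structure LegalLabelling {V : Type*} (T : SimpleGraph V) (d : ℕ) where
  label : V → V → Fin d
  symm : ∀ u v : V, T.Adj u v → label u v = label v u
  inj : ∀ ⦃x u w : V⦄, T.Adj x u → T.Adj x w → label x u = label x w → u = w
  surj : ∀ (x : V) (i : Fin d), ∃ w : V, T.Adj x w ∧ label x w = i

/-- Membership in the Burger–Mozes universal group U^{(l)}(F). -/
def InU {V : Type*} {d : ℕ} (T : SimpleGraph V) (l : LegalLabelling T d)
    (F : Subgroup (Equiv.Perm (Fin d))) (g : Equiv.Perm V) : Prop :=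
  IsTreeAut T g ∧
    ∀ x : V, ∃ a ∈ F, ∀ w : V, T.Adj x w → l.label (g x) (g w) = a (l.label x w)

/-- The universal group U^{(l)}(F) as a subgroup of the permutations of the vertices. -/
def Usub {V : Type*} {d : ℕ} (T : SimpleGraph V) (l : LegalLabelling T d)
    (F : Subgroup (Equiv.Perm (Fin d))) : Subgroup (Equiv.Perm V) where
  carrier := {g | InU T l F g}
  one_mem' := ⟨fun _ _ => Iff.rfl, fun _ => ⟨1, one_mem F, fun _ _ => rfl⟩⟩
  mul_mem' := by
    rintro g h ⟨hg1, hg2⟩ ⟨hh1, hh2⟩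
    refine ⟨fun u v => (hg1 (h u) (h v)).trans (hh1 u v), fun x => ?_⟩
    obtain ⟨a, ha, hag⟩ := hg2 (h x)
    obtain ⟨c, hc, hch⟩ := hh2 x
    refine ⟨a * c, mul_mem ha hc, fun w hw => ?_⟩
    have hw' : T.Adj (h x) (h w) := (hh1 x w).mpr hw
    calc l.label (g (h x)) (g (h w)) = a (l.label (h x) (h w)) := hag (h w) hw'
      _ = a (c (l.label x w)) := by rw [hch w hw]
      _ = (a * c) (l.label x w) := rfl
  inv_mem' := by
    rintro g ⟨hg1, hg2⟩
    constructor
    · intro u v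
      have h2 := hg1 (g⁻¹ u) (g⁻¹ v)
      simp only [← Equiv.Perm.mul_apply, mul_inv_cancel, Equiv.Perm.one_apply] at h2
      exact h2.symm
    · intro x
      obtain ⟨a, ha, hag⟩ := hg2 (g⁻¹ x)
      refine ⟨a⁻¹, inv_mem ha, fun w hw => ?_⟩
      have hw' : T.Adj (g⁻¹ x) (g⁻¹ w) := by
        have h2 := hg1 (g⁻¹ x) (g⁻¹ w)
        simp only [← Equiv.Perm.mul_apply, mul_inv_cancel, Equiv.Perm.one_apply] at h2
        exact h2.mp hw
      have key := hag (g⁻¹ w) hw'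
      simp only [← Equiv.Perm.mul_apply, mul_inv_cancel, Equiv.Perm.one_apply] at key
      rw [key, ← Equiv.Perm.mul_apply, inv_mul_cancel, Equiv.Perm.one_apply]

/-- The stabilizer of the vertex b in U^{(l)}(F). -/
def Ustab {V : Type*} {d : ℕ} (T : SimpleGraph V) (l : LegalLabelling T d)
    (F : Subgroup (Equiv.Perm (Fin d))) (b : V) : Subgroup (Equiv.Perm V) :=
  Usub T l F ⊓ MulAction.stabilizer (Equiv.Perm V) b

/-- The topology of pointwise convergence on vertices (vertices being discrete). -/
def permTop (V : Type*) : TopologicalSpace (Equiv.Perm V) :=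
  TopologicalSpace.induced (fun g : Equiv.Perm V => (g : V → V))
    (@Pi.topologicalSpace V (fun _ => V) (fun _ => ⊥))

/-- Δ_n: Δ_1 = Fin d and Δ_{n+1} = Δ_n × D with D = Fin (d-1) (indexed from 0 here). -/
def Delta (d : ℕ) : ℕ → Type
  | 0 => Fin d
  | n+1 => Delta d n × Fin (d-1)

def deltaFst (d n : ℕ) : Delta d (n+1) → Delta d n := fun p => p.1
def deltaSnd (d n : ℕ) : Delta d (n+1) → Fin (d-1) := fun p => p.2
def deltaMk (d n : ℕ) (x : Delta d n) (j : Fin (d-1)) : Delta d (n+1) := (x, j)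

/-- The stabilizer F_d of the last point of {1,…,d} in F, viewed as a set of permutations
of D = Fin (d-1) via the identification of {1,…,d-1} with D. -/
def FdStab (d : ℕ) (F : Subgroup (Equiv.Perm (Fin d))) : Set (Equiv.Perm (Fin (d-1))) :=
  {τ | ∃ a ∈ F, ∀ j : Fin (d-1),
    a (Fin.castLE (Nat.sub_le d 1) j) = Fin.castLE (Nat.sub_le d 1) (τ j)}

/-- F(n): the iterated permutational wreath products, F(1) = F and
F(n+1) = F(n) ⋉ F_d^{Δ_n} acting on Δ_{n+1} = Δ_n × D, where F(n) permutes the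
Δ_n-coordinate and the copy of F_d indexed by ω ∈ Δ_n acts on the D-coordinate over ω. -/
def FnSet (d : ℕ) (F : Subgroup (Equiv.Perm (Fin d))) :
    (n : ℕ) → Set (Equiv.Perm (Delta d n))
  | 0 => (F : Set (Equiv.Perm (Fin d)))
  | n+1 => {π | ∃ σ ∈ FnSet d F n, ∃ τ : Delta d n → Equiv.Perm (Fin (d-1)),
      (∀ ω, τ ω ∈ FdStab d F) ∧
      ∀ p : Delta d (n+1),
        π p = deltaMk d n (σ (deltaFst d n p)) (τ (deltaFst d n p) (deltaSnd d n p))}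

/-- The inverse limit lim← F(n) along the canonical projections π_n : F(n+1) → F(n), as a
subset of the product group ∏ₙ Sym(Δ_n): the compatible sequences (f_n) with
f_n ∈ F(n). -/
def limSet (d : ℕ) (F : Subgroup (Equiv.Perm (Fin d))) :
    Set ((n : ℕ) → Equiv.Perm (Delta d n)) :=
  {f | (∀ n, f n ∈ FnSet d F n) ∧
    ∀ n, ∀ p : Delta d (n+1), deltaFst d n (f (n+1) p) = f n (deltaFst d n p)}

theorem Equiv.Perm.apply_inv_self {α : Type*} (f : Equiv.Perm α) (x : α) : f (f⁻¹ x) = x :=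
  Equiv.apply_symm_apply f x

theorem Equiv.Perm.inv_apply_self {α : Type*} (f : Equiv.Perm α) (x : α) : f⁻¹ (f x) = x :=
  Equiv.symm_apply_apply f x

namespace BMAux

variable {V : Type*} {T : SimpleGraph V} {d : ℕ}

noncomputable def nbr (l : LegalLabelling T d) (x : V) (i : Fin d) : V :=
  (l.surj x i).choose

lemma nbr_adj (l : LegalLabelling T d) (x : V) (i : Fin d) : T.Adj x (nbr l x i) :=
  (l.surj x i).choose_spec.1

lemma nbr_label (l : LegalLabelling T d) (x : V) (i : Fin d) :
    l.label x (nbr l x i) = i := (l.surj x i).choose_spec.2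

lemma eq_nbr_of_adj {l : LegalLabelling T d} {x w : V} (h : T.Adj x w) :
    w = nbr l x (l.label x w) :=
  l.inj h (nbr_adj l x _) (nbr_label l x _).symm

instance deltaFinite (d : ℕ) : ∀ n, Finite (Delta d n)
  | 0 => inferInstanceAs (Finite (Fin d))
  | n+1 => @Finite.instProd _ _ (deltaFinite d n) _

def dtop (hd : 3 ≤ d) : Fin d := ⟨d-1, by omega⟩

def embed : Fin (d-1) → Fin d := Fin.castLE (Nat.sub_le d 1)

lemma embed_injective : Function.Injective (embed (d := d)) :=
  Fin.castLE_injective _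

lemma embed_ne_top (hd : 3 ≤ d) (j : Fin (d-1)) : embed j ≠ dtop hd := by
  have hj := j.isLt
  intro h
  have : (embed j : ℕ) = d - 1 := congrArg Fin.val h
  simp only [embed, Fin.coe_castLE] at this
  omega

lemma exists_embed (hd : 3 ≤ d) {c : Fin d} (h : c ≠ dtop hd) : ∃ j, embed j = c := by
  have hc := c.isLt
  have : (c : ℕ) ≠ d - 1 := fun hh => h (Fin.ext hh)
  exact ⟨⟨c, by omega⟩, Fin.ext rfl⟩

section Norm
variable {F : Subgroup (Equiv.Perm (Fin d))}

noncomputable def normPerm (hd : 3 ≤ d)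
    (hFt : ∀ i j : Fin d, ∃ a ∈ F, a i = j) (i : Fin d) : Equiv.Perm (Fin d) :=
  (hFt i (dtop hd)).choose

lemma normPerm_mem (hd : 3 ≤ d) (hFt : ∀ i j : Fin d, ∃ a ∈ F, a i = j) (i : Fin d) :
    normPerm hd hFt i ∈ F := (hFt i (dtop hd)).choose_spec.1

lemma normPerm_apply (hd : 3 ≤ d) (hFt : ∀ i j : Fin d, ∃ a ∈ F, a i = j) (i : Fin d) :
    normPerm hd hFt i i = dtop hd := (hFt i (dtop hd)).choose_spec.2

end Norm

end BMAux

namespace BMAux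

variable {V : Type*} {T : SimpleGraph V} {d : ℕ} {F : Subgroup (Equiv.Perm (Fin d))}

variable (l : LegalLabelling T d) (hd : 3 ≤ d)
  (hFt : ∀ i j : Fin d, ∃ a ∈ F, a i = j) (b : V)

/-- (node, parent) pair for each address. -/
noncomputable def nodePar : (n : ℕ) → Delta d n → V × V
  | 0, i => (nbr l b i, b)
  | n+1, p =>
      let x := (nodePar n p.1).1
      let q := (nodePar n p.1).2
      (nbr l x ((normPerm hd hFt (l.label x q))⁻¹ (embed p.2)), x)

noncomputable def node (n : ℕ) (ω : Delta d n) : V := (nodePar l hd hFt b n ω).1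
noncomputable def par (n : ℕ) (ω : Delta d n) : V := (nodePar l hd hFt b n ω).2

/-- label from a node towards its parent -/
noncomputable def backL (n : ℕ) (ω : Delta d n) : Fin d :=
  l.label (node l hd hFt b n ω) (par l hd hFt b n ω)

/-- label from a node towards its j-th child -/
noncomputable def childL (n : ℕ) (ω : Delta d n) (j : Fin (d-1)) : Fin d :=
  (normPerm hd hFt (backL l hd hFt b n ω))⁻¹ (embed j)

lemma node_zero (i : Fin d) : node l hd hFt b 0 i = nbr l b i := rfl
lemma par_zero (i : Fin d) : par l hd hFt b 0 i = b := rfl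

lemma par_succ (n : ℕ) (p : Delta d (n+1)) :
    par l hd hFt b (n+1) p = node l hd hFt b n p.1 := rfl

lemma node_succ (n : ℕ) (p : Delta d (n+1)) :
    node l hd hFt b (n+1) p =
      nbr l (node l hd hFt b n p.1) (childL l hd hFt b n p.1 p.2) := rfl

lemma adj_par (n : ℕ) (ω : Delta d n) :
    T.Adj (node l hd hFt b n ω) (par l hd hFt b n ω) := by
  cases n with
  | zero => exact (nbr_adj l b ω).symm
  | succ n => exact (nbr_adj l _ _).symm

lemma adj_child (n : ℕ) (ω : Delta d n) (j : Fin (d-1)) :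
    T.Adj (node l hd hFt b n ω) (node l hd hFt b (n+1) (ω, j)) :=
  nbr_adj l _ _

lemma label_par (n : ℕ) (ω : Delta d n) :
    l.label (node l hd hFt b n ω) (par l hd hFt b n ω) = backL l hd hFt b n ω := rfl

lemma label_child (n : ℕ) (ω : Delta d n) (j : Fin (d-1)) :
    l.label (node l hd hFt b n ω) (node l hd hFt b (n+1) (ω, j)) =
      childL l hd hFt b n ω j :=
  nbr_label l _ _

lemma label_zero (i : Fin d) : l.label b (node l hd hFt b 0 i) = i := nbr_label l b i

lemma childL_ne_backL (n : ℕ) (ω : Delta d n) (j : Fin (d-1)) :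
    childL l hd hFt b n ω j ≠ backL l hd hFt b n ω := by
  intro h
  have := congrArg (normPerm hd hFt (backL l hd hFt b n ω)) h
  rw [childL] at this
  simp only [Equiv.Perm.apply_inv_self] at this
  rw [normPerm_apply] at this
  exact embed_ne_top hd j this

lemma child_ne_par (n : ℕ) (ω : Delta d n) (j : Fin (d-1)) :
    node l hd hFt b (n+1) (ω, j) ≠ par l hd hFt b n ω := by
  intro h
  apply childL_ne_backL l hd hFt b n ω j
  rw [← label_child, ← label_par, h]

/-- every neighbor of a node is the parent or a child -/
lemma adj_node_cases {n : ℕ} {ω : Delta d n} {v : V}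
    (h : T.Adj (node l hd hFt b n ω) v) :
    v = par l hd hFt b n ω ∨ ∃ j, v = node l hd hFt b (n+1) (ω, j) := by
  set x := node l hd hFt b n ω
  by_cases hb : l.label x v = backL l hd hFt b n ω
  · left
    exact l.inj h (adj_par l hd hFt b n ω) (by rw [hb, label_par])
  · right
    have hne : normPerm hd hFt (backL l hd hFt b n ω) (l.label x v) ≠ dtop hd := by
      intro hh
      apply hb
      have := congrArg (⇑(normPerm hd hFt (backL l hd hFt b n ω))⁻¹) hh
      simp only [Equiv.Perm.inv_apply_self] at this
      rw [this, ← normPerm_apply hd hFt (backL l hd hFt b n ω)]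
      simp
    obtain ⟨j, hj⟩ := exists_embed hd hne
    refine ⟨j, l.inj h (adj_child l hd hFt b n ω j) ?_⟩
    rw [label_child, childL, hj]
    simp
lemma adj_b_cases {v : V} (h : T.Adj b v) : ∃ i, v = node l hd hFt b 0 i :=
  ⟨l.label b v, eq_nbr_of_adj h⟩

end BMAux

namespace BMAux
open SimpleGraph

variable {V : Type*} {T : SimpleGraph V} {d : ℕ}

lemma path_length_eq_dist (hT : T.IsTree) {u v : V} (p : T.Walk u v) (hp : p.IsPath) :
    p.length = T.dist u v := by
  classical
  classical
  classical
  classical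
  obtain ⟨w, hw⟩ := hT.isConnected.exists_walk_length_eq_dist u v
  have hb : w.bypass.IsPath := w.bypass_isPath
  have : (⟨p, hp⟩ : T.Path u v) = ⟨w.bypass, hb⟩ :=
    (SimpleGraph.isAcyclic_iff_path_unique.mp hT.IsAcyclic) _ _
  have hpw : p = w.bypass := congrArg Subtype.val this
  refine le_antisymm ?_ (SimpleGraph.dist_le p)
  rw [hpw, ← hw]
  exact w.length_bypass_le

lemma isPath_concat {u v w : V} {p : T.Walk u v} (hp : p.IsPath) (h : T.Adj v w)
    (hw : w ∉ p.support) : (p.concat h).IsPath := by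
  classical
  rw [SimpleGraph.Walk.isPath_def, SimpleGraph.Walk.support_concat,
    List.nodup_append]
  refine ⟨hp.support_nodup, List.nodup_singleton _, ?_⟩
  intro a ha c hb
  rw [List.mem_singleton] at hb
  subst hb
  exact fun h => hw (h ▸ ha)

lemma geodesic_avoiding (hT : T.IsTree) {b x : V} {k : ℕ} (hx : T.dist b x = k + 1)
    {y : V} (hy : T.Adj x y) (hyd : T.dist b y ≤ k + 1) :
    ∃ (p : T.Walk b y), p.IsPath ∧ x ∉ p.support ∧ T.dist b y = k := by
  classical
  obtain ⟨w, hw⟩ := hT.isConnected.exists_walk_length_eq_dist b y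
  have hbl : w.bypass.length = T.dist b y := path_length_eq_dist hT _ w.bypass_isPath
  have hxs : x ∉ w.bypass.support := by
    intro hxs
    have ht : (w.bypass.takeUntil x hxs).IsPath := w.bypass_isPath.takeUntil hxs
    have htl : (w.bypass.takeUntil x hxs).length = k + 1 := by
      rw [path_length_eq_dist hT _ ht, hx]
    have hsplit := congrArg SimpleGraph.Walk.length (w.bypass.take_spec hxs)
    rw [SimpleGraph.Walk.length_append] at hsplit
    have hble : w.bypass.length ≤ k + 1 := hbl ▸ hyd
    have hdrop : (w.bypass.dropUntil x hxs).length = 0 := by omega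
    exact hy.ne (SimpleGraph.Walk.eq_of_length_eq_zero hdrop)
  have hq : (w.bypass.concat hy.symm).IsPath :=
    isPath_concat w.bypass_isPath hy.symm hxs
  have hql : (w.bypass.concat hy.symm).length = k + 1 := by
    rw [path_length_eq_dist hT _ hq, hx]
  rw [SimpleGraph.Walk.length_concat] at hql
  exact ⟨w.bypass, w.bypass_isPath, hxs, by omega⟩

lemma closer_unique (hT : T.IsTree) {b x : V} {k : ℕ} (hx : T.dist b x = k + 1)
    {y y' : V} (hy : T.Adj x y) (hyd : T.dist b y ≤ k + 1)
    (hy' : T.Adj x y') (hyd' : T.dist b y' ≤ k + 1) : y = y' := by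
  classical
  obtain ⟨p, hp, hxp, -⟩ := geodesic_avoiding hT hx hy hyd
  obtain ⟨p', hp', hxp', -⟩ := geodesic_avoiding hT hx hy' hyd'
  have hq : (p.concat hy.symm).IsPath := isPath_concat hp hy.symm hxp
  have hq' : (p'.concat hy'.symm).IsPath := isPath_concat hp' hy'.symm hxp'
  have : (⟨p.concat hy.symm, hq⟩ : T.Path b x) = ⟨p'.concat hy'.symm, hq'⟩ :=
    (SimpleGraph.isAcyclic_iff_path_unique.mp hT.IsAcyclic) _ _
  have heq : p.concat hy.symm = p'.concat hy'.symm := congrArg Subtype.val this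
  obtain ⟨hv, -⟩ := SimpleGraph.Walk.concat_inj heq
  exact hv

lemma dist_closer (hT : T.IsTree) {b x : V} {k : ℕ} (hx : T.dist b x = k + 1)
    {y : V} (hy : T.Adj x y) (hyd : T.dist b y ≤ k + 1) : T.dist b y = k := by
  classical
  exact (geodesic_avoiding hT hx hy hyd).choose_spec.2.2

end BMAux

namespace BMAux
open SimpleGraph

variable {V : Type*} {T : SimpleGraph V} {d : ℕ} {F : Subgroup (Equiv.Perm (Fin d))}
variable (hT : T.IsTree) (l : LegalLabelling T d) (hd : 3 ≤ d)
  (hFt : ∀ i j : Fin d, ∃ a ∈ F, a i = j) (b : V)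

include hT

lemma dist_node_par : ∀ (n : ℕ) (ω : Delta d n),
    T.dist b (node l hd hFt b n ω) = n + 1 ∧ T.dist b (par l hd hFt b n ω) = n := by
  intro n
  induction n with
  | zero =>
    intro ω
    have hadj : T.Adj (node l hd hFt b 0 ω) b := adj_par l hd hFt b 0 ω
    constructor
    · refine le_antisymm ?_ ?_
      · have := SimpleGraph.dist_le (SimpleGraph.Walk.cons hadj.symm SimpleGraph.Walk.nil)
        simpa using this
      · exact hT.isConnected.pos_dist_of_ne (Ne.symm hadj.ne)
    · exact SimpleGraph.dist_self
  | succ n ih =>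
    rintro ⟨ω1, ω2⟩
    obtain ⟨hx, hpx⟩ := ih ω1
    have hc : T.Adj (node l hd hFt b n ω1) (node l hd hFt b (n+1) (ω1, ω2)) :=
      adj_child l hd hFt b n ω1 ω2
    refine ⟨?_, hx⟩
    obtain ⟨w, hw⟩ := hT.isConnected.exists_walk_length_eq_dist b (node l hd hFt b n ω1)
    have hub : T.dist b (node l hd hFt b (n+1) (ω1, ω2)) ≤ n + 2 := by
      have := SimpleGraph.dist_le (w.concat hc)
      rw [SimpleGraph.Walk.length_concat, hw, hx] at this
      exact this
    by_contra hne
    have hle : T.dist b (node l hd hFt b (n+1) (ω1, ω2)) ≤ n + 1 := by omega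
    have hpar_le : T.dist b (par l hd hFt b n ω1) ≤ n + 1 := by omega
    have := closer_unique hT hx hc hle (adj_par l hd hFt b n ω1) hpar_le
    exact child_ne_par l hd hFt b n ω1 ω2 this

lemma dist_node (n : ℕ) (ω : Delta d n) :
    T.dist b (node l hd hFt b n ω) = n + 1 :=
  (dist_node_par hT l hd hFt b n ω).1

lemma node_ne_b (n : ℕ) (ω : Delta d n) : node l hd hFt b n ω ≠ b := by
  intro h
  have := dist_node hT l hd hFt b n ω
  rw [h, SimpleGraph.dist_self] at this
  omega

/-- the parent is the unique neighbor not farther from b -/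
lemma eq_par_of_adj (n : ℕ) (ω : Delta d n) {y : V}
    (hy : T.Adj (node l hd hFt b n ω) y) (hyd : T.dist b y ≤ n + 1) :
    y = par l hd hFt b n ω := by
  obtain ⟨hx, hp⟩ := dist_node_par hT l hd hFt b n ω
  exact closer_unique hT hx hy hyd (adj_par l hd hFt b n ω) (by omega)

omit hT in
lemma childL_inj (n : ℕ) (ω : Delta d n) {j j' : Fin (d-1)}
    (h : childL l hd hFt b n ω j = childL l hd hFt b n ω j') : j = j' := by
  apply embed_injective (d := d)
  have := congrArg (normPerm hd hFt (backL l hd hFt b n ω)) h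
  simpa [childL] using this

lemma node_injective_level : ∀ (n : ℕ) {ω ψ : Delta d n},
    node l hd hFt b n ω = node l hd hFt b n ψ → ω = ψ := by
  intro n
  induction n with
  | zero =>
    intro ω ψ h
    have := congrArg (l.label b) h
    rwa [label_zero l hd hFt b ω, label_zero l hd hFt b ψ] at this
  | succ n ih =>
    rintro ⟨ω1, ω2⟩ ⟨ψ1, ψ2⟩ h
    have hd2 : T.dist b (node l hd hFt b (n+1) (ω1, ω2)) = (n+1) + 1 :=
      dist_node hT l hd hFt b (n+1) (ω1, ω2)
    have ha : T.Adj (node l hd hFt b (n+1) (ω1, ω2)) (node l hd hFt b n ω1) :=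
      (adj_child l hd hFt b n ω1 ω2).symm
    have hb' : T.Adj (node l hd hFt b (n+1) (ω1, ω2)) (node l hd hFt b n ψ1) := by
      rw [h]
      exact (adj_child l hd hFt b n ψ1 ψ2).symm
    have h1 : node l hd hFt b n ω1 = node l hd hFt b n ψ1 :=
      closer_unique hT hd2 ha
        (by rw [dist_node hT l hd hFt b n ω1]; omega) hb'
        (by rw [dist_node hT l hd hFt b n ψ1]; omega)
    have h1' : ω1 = ψ1 := ih h1
    subst h1'
    have h2 : ω2 = ψ2 := by
      apply childL_inj l hd hFt b n ω1
      rw [← label_child l hd hFt b n ω1 ω2, ← label_child l hd hFt b n ω1 ψ2, h]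
    rw [h2]

lemma node_injective_sigma {n m : ℕ} {ω : Delta d n} {ψ : Delta d m}
    (h : node l hd hFt b n ω = node l hd hFt b m ψ) :
    (⟨n, ω⟩ : Σ k, Delta d k) = ⟨m, ψ⟩ := by
  have hn : n = m := by
    have h1 := dist_node hT l hd hFt b n ω
    have h2 := dist_node hT l hd hFt b m ψ
    rw [h] at h1
    omega
  subst hn
  rw [node_injective_level hT l hd hFt b n h]

/-- every vertex is b or a node -/
lemma vertex_decomp : ∀ v : V, v = b ∨ ∃ (n : ℕ) (ω : Delta d n),
    v = node l hd hFt b n ω := by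
  set S : Set V := {v | v = b ∨ ∃ (n : ℕ) (ω : Delta d n), v = node l hd hFt b n ω}
    with hSdef
  have hclosed : ∀ u v : V, u ∈ S → T.Adj u v → v ∈ S := by
    rintro u v (hu | ⟨n, ω, hu⟩) hadj <;> rw [hu] at hadj
    · obtain ⟨i, hi⟩ := adj_b_cases l hd hFt b hadj
      exact Or.inr ⟨0, i, hi⟩
    · rcases adj_node_cases l hd hFt b hadj with h | ⟨j, hj⟩
      · cases n with
        | zero => exact Or.inl h
        | succ n => exact Or.inr ⟨n, _, h⟩
      · exact Or.inr ⟨n+1, _, hj⟩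
  have hwalk : ∀ (u v : V), T.Walk u v → u ∈ S → v ∈ S := by
    intro u v w
    induction w with
    | nil => exact id
    | cons hadj p ih => exact fun hu => ih (hclosed _ _ hu hadj)
  intro v
  exact hwalk b v (hT.isConnected b v).some (Or.inl rfl)

end BMAux

namespace BMAux
open SimpleGraph

variable {V : Type*} {T : SimpleGraph V} {d : ℕ} {F : Subgroup (Equiv.Perm (Fin d))}
variable (hT : T.IsTree) (l : LegalLabelling T d) (hd : 3 ≤ d)
  (hFt : ∀ i j : Fin d, ∃ a ∈ F, a i = j) (b : V)

/-- a tree automorphism induces walks -/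
def autHom (g : Equiv.Perm V) (hg : IsTreeAut T g) : T →g T :=
  ⟨g, fun {a c} h => (hg a c).mpr h⟩

lemma dist_map_le (g : Equiv.Perm V) (hg : IsTreeAut T g) (hT : T.IsTree) (u v : V) :
    T.dist (g u) (g v) ≤ T.dist u v := by
  obtain ⟨w, hw⟩ := hT.isConnected.exists_walk_length_eq_dist u v
  have := SimpleGraph.dist_le (w.map (autHom g hg))
  rwa [SimpleGraph.Walk.length_map, hw] at this

lemma dist_map (g : Equiv.Perm V) (hg : IsTreeAut T g) (hT : T.IsTree) (u v : V) :
    T.dist (g u) (g v) = T.dist u v := by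
  refine le_antisymm (dist_map_le g hg hT u v) ?_
  have hginv : IsTreeAut T g⁻¹ := by
    intro a c
    have := hg (g⁻¹ a) (g⁻¹ c)
    rw [Equiv.Perm.apply_inv_self, Equiv.Perm.apply_inv_self] at this
    exact this.symm
  have := dist_map_le g⁻¹ hginv hT (g u) (g v)
  rwa [Equiv.Perm.inv_apply_self, Equiv.Perm.inv_apply_self] at this

include hT

lemma exists_act {g : Equiv.Perm V} (hg : IsTreeAut T g) (hgb : g b = b)
    (n : ℕ) (ω : Delta d n) :
    ∃ ψ : Delta d n, g (node l hd hFt b n ω) = node l hd hFt b n ψ := by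
  rcases vertex_decomp hT l hd hFt b (g (node l hd hFt b n ω)) with h | ⟨m, ψ, h⟩
  · exfalso
    apply node_ne_b hT l hd hFt b n ω
    have : g (node l hd hFt b n ω) = g b := by rw [h, hgb]
    exact g.injective this
  · have hm : m = n := by
      have h1 : T.dist b (g (node l hd hFt b n ω)) = n + 1 := by
        have := dist_map g hg hT b (node l hd hFt b n ω)
        rw [hgb] at this
        rw [this, dist_node hT l hd hFt b n ω]
      rw [h, dist_node hT l hd hFt b m ψ] at h1
      omega
    subst hm
    exact ⟨ψ, h⟩

/-- the permutation of level-n addresses induced by g -/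
noncomputable def actF {g : Equiv.Perm V} (hg : IsTreeAut T g) (hgb : g b = b)
    (n : ℕ) (ω : Delta d n) : Delta d n :=
  (exists_act hT l hd hFt b hg hgb n ω).choose

lemma actF_spec {g : Equiv.Perm V} (hg : IsTreeAut T g) (hgb : g b = b)
    (n : ℕ) (ω : Delta d n) :
    g (node l hd hFt b n ω) = node l hd hFt b n (actF hT l hd hFt b hg hgb n ω) :=
  (exists_act hT l hd hFt b hg hgb n ω).choose_spec

lemma actF_injective {g : Equiv.Perm V} (hg : IsTreeAut T g) (hgb : g b = b)
    (n : ℕ) : Function.Injective (actF hT l hd hFt b hg hgb n) := by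
  intro ω ψ h
  apply node_injective_level hT l hd hFt b n
  apply g.injective
  rw [actF_spec hT l hd hFt b hg hgb n ω, actF_spec hT l hd hFt b hg hgb n ψ, h]

/-- the induced permutation as an Equiv -/
noncomputable def actE {g : Equiv.Perm V} (hg : IsTreeAut T g) (hgb : g b = b)
    (n : ℕ) : Equiv.Perm (Delta d n) :=
  Equiv.ofBijective _
    ((Finite.injective_iff_bijective).mp (actF_injective hT l hd hFt b hg hgb n))

lemma actE_spec {g : Equiv.Perm V} (hg : IsTreeAut T g) (hgb : g b = b)
    (n : ℕ) (ω : Delta d n) :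
    g (node l hd hFt b n ω) = node l hd hFt b n (actE hT l hd hFt b hg hgb n ω) :=
  actF_spec hT l hd hFt b hg hgb n ω

/-- key compatibility: the action commutes with taking parents -/
lemma actE_fst {g : Equiv.Perm V} (hg : IsTreeAut T g) (hgb : g b = b)
    (n : ℕ) (ω : Delta d n) (j : Fin (d-1)) :
    (actE hT l hd hFt b hg hgb (n+1) (ω, j)).1 = actE hT l hd hFt b hg hgb n ω := by
  apply node_injective_level hT l hd hFt b n
  set ψ := actE hT l hd hFt b hg hgb (n+1) (ω, j) with hψ
  have hx : g (node l hd hFt b (n+1) (ω, j)) = node l hd hFt b (n+1) ψ :=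
    actE_spec hT l hd hFt b hg hgb (n+1) (ω, j)
  have hadj : T.Adj (node l hd hFt b (n+1) ψ) (g (node l hd hFt b n ω)) := by
    rw [← hx]
    exact (hg _ _).mpr (adj_child l hd hFt b n ω j).symm
  have hdist : T.dist b (g (node l hd hFt b n ω)) ≤ (n+1) + 1 := by
    have := dist_map g hg hT b (node l hd hFt b n ω)
    rw [hgb] at this
    rw [this, dist_node hT l hd hFt b n ω]
    omega
  have := eq_par_of_adj hT l hd hFt b (n+1) ψ hadj hdist
  rw [par_succ] at this
  rw [← this, actE_spec hT l hd hFt b hg hgb n ω]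

end BMAux

namespace BMAux
open SimpleGraph

variable {V : Type*} {T : SimpleGraph V} {d : ℕ} {F : Subgroup (Equiv.Perm (Fin d))}
variable (hT : T.IsTree) (l : LegalLabelling T d) (hd : 3 ≤ d)
  (hFt : ∀ i j : Fin d, ∃ a ∈ F, a i = j) (b : V)

include hT

lemma actE_zero_mem {g : Equiv.Perm V} (hU : InU T l F g) (hgb : g b = b) :
    actE hT l hd hFt b hU.1 hgb 0 ∈ FnSet d F 0 := by
  obtain ⟨a, haF, ha⟩ := hU.2 b
  have : actE hT l hd hFt b hU.1 hgb 0 = a := by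
    apply Equiv.ext
    intro i
    have h1 := ha (node l hd hFt b 0 i) (adj_par l hd hFt b 0 i).symm
    rw [hgb, label_zero l hd hFt b i, actE_spec hT l hd hFt b hU.1 hgb 0 i,
      label_zero l hd hFt b (actE hT l hd hFt b hU.1 hgb 0 i)] at h1
    exact h1
  rw [this]
  exact haF

lemma actE_succ_eq {g : Equiv.Perm V} (hU : InU T l F g) (hgb : g b = b) (n : ℕ) :
    ∃ τ : Delta d n → Equiv.Perm (Fin (d-1)),
      (∀ ω, τ ω ∈ FdStab d F) ∧
      ∀ (ω : Delta d n) (j : Fin (d-1)),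
        actE hT l hd hFt b hU.1 hgb (n+1) (ω, j) =
          (actE hT l hd hFt b hU.1 hgb n ω, τ ω j) := by
  set σ := actE hT l hd hFt b hU.1 hgb n with hσ
  set A := actE hT l hd hFt b hU.1 hgb (n+1) with hA
  -- the underlying function of τ
  have hinj : ∀ ω : Delta d n, Function.Injective (fun j => (A (ω, j)).2) := by
    intro ω j j' h
    have h2 : A (ω, j) = A (ω, j') := by
      apply Prod.ext
      · rw [actE_fst hT l hd hFt b hU.1 hgb n ω j,
          actE_fst hT l hd hFt b hU.1 hgb n ω j']
      · exact h
    have := A.injective h2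
    exact (Prod.mk.injEq _ _ _ _).mp this |>.2
  refine ⟨fun ω => Equiv.ofBijective _ ((Finite.injective_iff_bijective).mp (hinj ω)),
    ?_, ?_⟩
  · intro ω
    obtain ⟨a, haF, ha⟩ := hU.2 (node l hd hFt b n ω)
    refine ⟨normPerm hd hFt (backL l hd hFt b n (σ ω)) * a *
      (normPerm hd hFt (backL l hd hFt b n ω))⁻¹,
      mul_mem (mul_mem (normPerm_mem hd hFt _) haF) (inv_mem (normPerm_mem hd hFt _)),
      ?_⟩
    intro j
    simp only [Equiv.Perm.mul_apply, Equiv.ofBijective_apply]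
    have e1 : (normPerm hd hFt (backL l hd hFt b n ω))⁻¹ (Fin.castLE (Nat.sub_le d 1) j)
        = childL l hd hFt b n ω j := rfl
    rw [e1]
    have e2 := ha (node l hd hFt b (n+1) (ω, j)) (adj_child l hd hFt b n ω j)
    rw [label_child] at e2
    rw [← e2]
    have e3 : g (node l hd hFt b n ω) = node l hd hFt b n (σ ω) :=
      actE_spec hT l hd hFt b hU.1 hgb n ω
    have e4 : g (node l hd hFt b (n+1) (ω, j)) =
        node l hd hFt b (n+1) (σ ω, (A (ω, j)).2) := by
      rw [actE_spec hT l hd hFt b hU.1 hgb (n+1) (ω, j)]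
      congr 1
      apply Prod.ext
      · exact actE_fst hT l hd hFt b hU.1 hgb n ω j
      · rfl
    rw [e3, e4, label_child, childL]
    simp [embed]
  · intro ω j
    apply Prod.ext
    · exact actE_fst hT l hd hFt b hU.1 hgb n ω j
    · rfl

lemma actE_mem {g : Equiv.Perm V} (hU : InU T l F g) (hgb : g b = b) :
    ∀ n, actE hT l hd hFt b hU.1 hgb n ∈ FnSet d F n := by
  intro n
  induction n with
  | zero => exact actE_zero_mem hT l hd hFt b hU hgb
  | succ n ih =>
    obtain ⟨τ, hτ, hspec⟩ := actE_succ_eq hT l hd hFt b hU hgb n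
    exact ⟨actE hT l hd hFt b hU.1 hgb n, ih, τ, hτ, fun p => hspec p.1 p.2⟩

end BMAux

namespace BMAux
open SimpleGraph

variable {V : Type*} {T : SimpleGraph V} {d : ℕ} {F : Subgroup (Equiv.Perm (Fin d))}
variable (hT : T.IsTree) (l : LegalLabelling T d) (hd : 3 ≤ d)
  (hFt : ∀ i j : Fin d, ∃ a ∈ F, a i = j) (b : V)

noncomputable def codeFun : (Σ n, Delta d n) ⊕ Unit → V
  | Sum.inl ⟨n, ω⟩ => node l hd hFt b n ω
  | Sum.inr _ => b

include hT

lemma codeFun_bijective : Function.Bijective (codeFun l hd hFt b) := by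
  constructor
  · rintro (⟨n, ω⟩ | u) (⟨m, ψ⟩ | u') h
    · simp only [codeFun] at h
      exact congrArg Sum.inl (node_injective_sigma hT l hd hFt b h)
    · exact absurd h (node_ne_b hT l hd hFt b n ω)
    · exact absurd h.symm (node_ne_b hT l hd hFt b m ψ)
    · rfl
  · intro v
    rcases vertex_decomp hT l hd hFt b v with h | ⟨n, ω, h⟩
    · exact ⟨Sum.inr (), h.symm⟩
    · exact ⟨Sum.inl ⟨n, ω⟩, h.symm⟩

noncomputable def code : ((Σ n, Delta d n) ⊕ Unit) ≃ V :=
  Equiv.ofBijective _ (codeFun_bijective hT l hd hFt b)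

lemma code_inl (n : ℕ) (ω : Delta d n) :
    code hT l hd hFt b (Sum.inl ⟨n, ω⟩) = node l hd hFt b n ω := rfl

lemma code_inr : code hT l hd hFt b (Sum.inr ()) = b := rfl

/-- the permutation of V induced by a compatible family of address permutations -/
noncomputable def gOf (f : (n : ℕ) → Equiv.Perm (Delta d n)) : Equiv.Perm V :=
  ((code hT l hd hFt b).symm.trans
    ((Equiv.sumCongr (Equiv.sigmaCongrRight fun n => f n) (Equiv.refl Unit)).trans
      (code hT l hd hFt b)))

lemma gOf_b (f : (n : ℕ) → Equiv.Perm (Delta d n)) : gOf hT l hd hFt b f b = b := by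
  have h : (code hT l hd hFt b).symm b = Sum.inr () := by
    rw [Equiv.symm_apply_eq]
    rfl
  simp only [gOf, Equiv.trans_apply, h]
  rfl

lemma gOf_node (f : (n : ℕ) → Equiv.Perm (Delta d n)) (n : ℕ) (ω : Delta d n) :
    gOf hT l hd hFt b f (node l hd hFt b n ω) = node l hd hFt b n (f n ω) := by
  have h : (code hT l hd hFt b).symm (node l hd hFt b n ω) = Sum.inl ⟨n, ω⟩ := by
    rw [Equiv.symm_apply_eq]
    rfl
  simp only [gOf, Equiv.trans_apply, h, Equiv.sumCongr_apply, Sum.map_inl,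
    Equiv.sigmaCongrRight_apply]
  rfl

lemma gOf_adj_forward (f : (n : ℕ) → Equiv.Perm (Delta d n))
    (hc : ∀ (n : ℕ) (p : Delta d (n+1)), (f (n+1) p).1 = f n p.1) :
    ∀ u v : V, T.Adj u v → T.Adj (gOf hT l hd hFt b f u) (gOf hT l hd hFt b f v) := by
  intro u v huv
  rcases vertex_decomp hT l hd hFt b u with hu | ⟨n, ω, hu⟩ <;> rw [hu] at huv ⊢
  · obtain ⟨i, hi⟩ := adj_b_cases l hd hFt b huv
    rw [hi, gOf_b, gOf_node]
    exact (adj_par l hd hFt b 0 (f 0 i)).symm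
  · rcases adj_node_cases l hd hFt b huv with h | ⟨j, h⟩ <;> rw [h, gOf_node]
    · cases n with
      | zero =>
        rw [par_zero l hd hFt b ω, gOf_b]
        exact adj_par l hd hFt b 0 (f 0 ω)
      | succ m =>
        rw [par_succ, gOf_node]
        have hpair : f (m+1) ω = ((f m) ω.1, (f (m+1) ω).2) := by
          rw [← hc m ω]
          exact rfl
        rw [hpair]
        exact (adj_child l hd hFt b m ((f m) ω.1) (f (m+1) ω).2).symm
    · rw [gOf_node hT l hd hFt b f (n+1) (ω, j)]
      have hpair : f (n+1) (ω, j) = ((f n) ω, (f (n+1) (ω, j)).2) := by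
        rw [← hc n (ω, j)]
        exact rfl
      rw [hpair]
      exact adj_child l hd hFt b n ((f n) ω) (f (n+1) (ω, j)).2

lemma gOf_inv (f : (n : ℕ) → Equiv.Perm (Delta d n)) :
    (gOf hT l hd hFt b f)⁻¹ = gOf hT l hd hFt b (fun n => (f n)⁻¹) := by
  rw [eq_comm, eq_inv_iff_mul_eq_one]
  apply Equiv.ext
  intro v
  simp only [Equiv.Perm.mul_apply, Equiv.Perm.one_apply]
  rcases vertex_decomp hT l hd hFt b v with h | ⟨n, ω, h⟩ <;> rw [h]
  · rw [gOf_b, gOf_b]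
  · rw [gOf_node, gOf_node, Equiv.Perm.inv_apply_self]

lemma gOf_isTreeAut (f : (n : ℕ) → Equiv.Perm (Delta d n))
    (hc : ∀ (n : ℕ) (p : Delta d (n+1)), (f (n+1) p).1 = f n p.1) :
    IsTreeAut T (gOf hT l hd hFt b f) := by
  have hc' : ∀ (n : ℕ) (p : Delta d (n+1)), ((f (n+1))⁻¹ p).1 = (f n)⁻¹ p.1 := by
    intro n p
    have := hc n ((f (n+1))⁻¹ p)
    rw [Equiv.Perm.apply_inv_self] at this
    rw [this, Equiv.Perm.inv_apply_self]
  intro u v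
  constructor
  · intro h
    have := gOf_adj_forward hT l hd hFt b (fun n => (f n)⁻¹) hc' _ _ h
    rw [← gOf_inv hT l hd hFt b f] at this
    rwa [Equiv.Perm.inv_apply_self, Equiv.Perm.inv_apply_self] at this
  · exact gOf_adj_forward hT l hd hFt b f hc u v

end BMAux

namespace BMAux
open SimpleGraph

variable {V : Type*} {T : SimpleGraph V} {d : ℕ} {F : Subgroup (Equiv.Perm (Fin d))}
variable (hT : T.IsTree) (l : LegalLabelling T d) (hd : 3 ≤ d)
  (hFt : ∀ i j : Fin d, ∃ a ∈ F, a i = j) (b : V)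

lemma FdStab_fix_top {τ : Equiv.Perm (Fin (d-1))} {a : Equiv.Perm (Fin d)}
    (ha : ∀ j, a (embed j) = embed (τ j)) (hd : 3 ≤ d) : a (dtop hd) = dtop hd := by
  by_contra h
  obtain ⟨j0, hj0⟩ := exists_embed hd h
  have h1 : a (embed (τ.symm j0)) = embed j0 := by
    rw [ha (τ.symm j0), Equiv.apply_symm_apply]
  rw [hj0] at h1
  have := a.injective h1
  exact embed_ne_top hd (τ.symm j0) this

lemma normPerm_inv_top (i : Fin d) :
    (normPerm hd hFt i)⁻¹ (dtop hd) = i := by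
  rw [← normPerm_apply hd hFt i, Equiv.Perm.inv_apply_self]

include hT

lemma gOf_inU (f : (n : ℕ) → Equiv.Perm (Delta d n)) (hf : f ∈ limSet d F) :
    InU T l F (gOf hT l hd hFt b f) := by
  obtain ⟨hmem, hc'⟩ := hf
  have hc : ∀ (n : ℕ) (p : Delta d (n+1)), (f (n+1) p).1 = f n p.1 := hc'
  refine ⟨gOf_isTreeAut hT l hd hFt b f hc, ?_⟩
  intro x
  rcases vertex_decomp hT l hd hFt b x with hx | ⟨n, ω, hx⟩ <;> rw [hx]
  · refine ⟨f 0, hmem 0, ?_⟩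
    intro w hw
    obtain ⟨i, hi⟩ := adj_b_cases l hd hFt b hw
    rw [hi, gOf_b, gOf_node, label_zero l hd hFt b (f 0 i), label_zero l hd hFt b i]
    rfl
  · obtain ⟨σ, hσmem, τ, hτ, hspec⟩ := hmem (n+1)
    have hσω : σ ω = f n ω := by
      have h1 := hc n (ω, ⟨0, by omega⟩)
      have h2 := hspec (ω, ⟨0, by omega⟩)
      rw [h2] at h1
      exact h1
    obtain ⟨aτ, haτF, haτ⟩ := hτ ω
    have haτ' : ∀ j, aτ (embed j) = embed (τ ω j) := haτ
    refine ⟨(normPerm hd hFt (backL l hd hFt b n (f n ω)))⁻¹ * aτ *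
      normPerm hd hFt (backL l hd hFt b n ω),
      mul_mem (mul_mem (inv_mem (normPerm_mem hd hFt _)) haτF) (normPerm_mem hd hFt _),
      ?_⟩
    intro w hw
    rcases adj_node_cases l hd hFt b hw with h | ⟨j, h⟩ <;> rw [h]
    · -- parent case
      rw [label_par]
      have hra : (normPerm hd hFt (backL l hd hFt b n (f n ω)))⁻¹
          (aτ (normPerm hd hFt (backL l hd hFt b n ω) (backL l hd hFt b n ω)))
          = backL l hd hFt b n (f n ω) := by
        rw [normPerm_apply hd hFt, FdStab_fix_top haτ' hd, normPerm_inv_top]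
      have hgpar : gOf hT l hd hFt b f (par l hd hFt b n ω) =
          par l hd hFt b n (f n ω) := by
        cases n with
        | zero => rw [par_zero l hd hFt b ω, par_zero l hd hFt b (f 0 ω), gOf_b]
        | succ m =>
          rw [par_succ, par_succ, gOf_node, hc m ω]
      rw [gOf_node, hgpar, label_par]
      exact hra.symm
    · -- child case
      rw [label_child, childL]
      have hgch : gOf hT l hd hFt b f (node l hd hFt b (n+1) (ω, j)) =
          node l hd hFt b (n+1) (f n ω, τ ω j) := by
        rw [gOf_node hT l hd hFt b f (n+1) (ω, j)]
        congr 1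
        rw [hspec (ω, j)]
        show (σ ω, τ ω j) = (f n ω, τ ω j)
        rw [hσω]
      rw [gOf_node, hgch, label_child, childL]
      simp only [Equiv.Perm.mul_apply, Equiv.Perm.apply_inv_self]
      rw [haτ' j]

lemma gOf_mem_Ustab (f : (n : ℕ) → Equiv.Perm (Delta d n)) (hf : f ∈ limSet d F) :
    gOf hT l hd hFt b f ∈ Ustab T l F b := by
  rw [Ustab, Subgroup.mem_inf]
  exact ⟨gOf_inU hT l hd hFt b f hf, by
    rw [MulAction.mem_stabilizer_iff]
    show gOf hT l hd hFt b f b = b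
    exact gOf_b hT l hd hFt b f⟩

lemma actE_gOf (f : (n : ℕ) → Equiv.Perm (Delta d n))
    (hg : IsTreeAut T (gOf hT l hd hFt b f)) (hgb : gOf hT l hd hFt b f b = b)
    (n : ℕ) : actE hT l hd hFt b hg hgb n = f n := by
  apply Equiv.ext
  intro ω
  apply node_injective_level hT l hd hFt b n
  rw [← actE_spec hT l hd hFt b hg hgb n ω, gOf_node]

end BMAux

namespace BMAux
open SimpleGraph

variable {V : Type*} {T : SimpleGraph V} {d : ℕ} {F : Subgroup (Equiv.Perm (Fin d))}
variable (hT : T.IsTree) (l : LegalLabelling T d) (hd : 3 ≤ d)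
  (hFt : ∀ i j : Fin d, ∃ a ∈ F, a i = j) (b : V)

lemma mem_Ustab_iff {g : Equiv.Perm V} :
    g ∈ Ustab T l F b ↔ InU T l F g ∧ g b = b := by
  rw [Ustab, Subgroup.mem_inf, MulAction.mem_stabilizer_iff]
  exact Iff.rfl

lemma Ustab_inU (g : ↥(Ustab T l F b)) : InU T l F (g : Equiv.Perm V) :=
  ((mem_Ustab_iff l b).mp g.2).1

lemma Ustab_fix (g : ↥(Ustab T l F b)) : (g : Equiv.Perm V) b = b :=
  ((mem_Ustab_iff l b).mp g.2).2

include hT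

/-- the homomorphism into the product of the symmetric groups of the levels -/
noncomputable def Phi : ↥(Ustab T l F b) →* ((n : ℕ) → Equiv.Perm (Delta d n)) :=
  MonoidHom.mk'
    (fun g => fun n => actE hT l hd hFt b (Ustab_inU l b g).1 (Ustab_fix l b g) n)
    (by
      intro g h
      funext n
      apply Equiv.ext
      intro ω
      apply node_injective_level hT l hd hFt b n
      rw [← actE_spec hT l hd hFt b (Ustab_inU l b (g*h)).1 (Ustab_fix l b (g*h)) n ω]
      show ((g : Equiv.Perm V) * (h : Equiv.Perm V)) (node l hd hFt b n ω) = _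
      rw [Equiv.Perm.mul_apply,
        actE_spec hT l hd hFt b (Ustab_inU l b h).1 (Ustab_fix l b h) n ω,
        actE_spec hT l hd hFt b (Ustab_inU l b g).1 (Ustab_fix l b g) n _]
      rfl)

lemma Phi_spec (g : ↥(Ustab T l F b)) (n : ℕ) (ω : Delta d n) :
    (g : Equiv.Perm V) (node l hd hFt b n ω) =
      node l hd hFt b n (Phi hT l hd hFt b g n ω) :=
  actE_spec hT l hd hFt b (Ustab_inU l b g).1 (Ustab_fix l b g) n ω

lemma Phi_injective : Function.Injective (Phi hT l hd hFt b (F := F)) := by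
  intro g h hgh
  apply Subtype.ext
  apply Equiv.ext
  intro v
  rcases vertex_decomp hT l hd hFt b v with hv | ⟨n, ω, hv⟩ <;> rw [hv]
  · rw [Ustab_fix l b g, Ustab_fix l b h]
  · rw [Phi_spec hT l hd hFt b g n ω, Phi_spec hT l hd hFt b h n ω, hgh]

lemma Phi_range : Set.range (Phi hT l hd hFt b (F := F)) = limSet d F := by
  ext f
  constructor
  · rintro ⟨g, rfl⟩
    constructor
    · intro n
      exact actE_mem hT l hd hFt b (Ustab_inU l b g) (Ustab_fix l b g) n
    · rintro n ⟨ω, j⟩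
      exact actE_fst hT l hd hFt b (Ustab_inU l b g).1 (Ustab_fix l b g) n ω j
  · intro hf
    refine ⟨⟨gOf hT l hd hFt b f, gOf_mem_Ustab hT l hd hFt b f hf⟩, ?_⟩
    funext n
    exact actE_gOf hT l hd hFt b f _ _ n

/-- membership of Phi g n = π is determined by finitely many vertex values -/
lemma Phi_coord_eq_iff (g : ↥(Ustab T l F b)) (n : ℕ) (π : Equiv.Perm (Delta d n)) :
    Phi hT l hd hFt b g n = π ↔
      ∀ ω : Delta d n, (g : Equiv.Perm V) (node l hd hFt b n ω) =
        node l hd hFt b n (π ω) := by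
  constructor
  · intro h ω
    rw [Phi_spec hT l hd hFt b g n ω, h]
  · intro h
    apply Equiv.ext
    intro ω
    apply node_injective_level hT l hd hFt b n
    rw [← Phi_spec hT l hd hFt b g n ω, h ω]

end BMAux


/-- The stabilizer of a vertex in U^{(l)}(F), F transitive, is isomorphic as a
topological group to the profinite group lim← F(n): there is an injective group
homomorphism φ from the stabilizer to the product ∏ₙ Sym(Δ_n) whose image is exactly the
inverse limit and which is a topological embedding (each Sym(Δ_n) being discrete). -/
theorem universal_group_stabilizer_profinite {V : Type*} (T : SimpleGraph V)
    (hT : T.IsTree) (d : ℕ) (hd : 3 ≤ d) (l : LegalLabelling T d)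
    (F : Subgroup (Equiv.Perm (Fin d))) (hFt : ∀ i j : Fin d, ∃ a ∈ F, a i = j)
    (b : V) :
    ∃ φ : ↥(Ustab T l F b) →* ((n : ℕ) → Equiv.Perm (Delta d n)),
      Function.Injective φ ∧
      Set.range φ = limSet d F ∧
      @Topology.IsEmbedding _ _
        (TopologicalSpace.induced Subtype.val (permTop V))
        (@Pi.topologicalSpace ℕ (fun n => Equiv.Perm (Delta d n)) (fun _ => ⊥))
        φ := by
  classical
  letI tV : TopologicalSpace V := ⊥
  haveI hdV : DiscreteTopology V := ⟨rfl⟩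
  letI tD : ∀ n : ℕ, TopologicalSpace (Equiv.Perm (Delta d n)) := fun _ => ⊥
  haveI hDd : ∀ n : ℕ, DiscreteTopology (Equiv.Perm (Delta d n)) := fun _ => ⟨rfl⟩
  letI tPI : TopologicalSpace (Equiv.Perm V) := permTop V
  refine ⟨BMAux.Phi hT l hd hFt b, BMAux.Phi_injective hT l hd hFt b,
    BMAux.Phi_range hT l hd hFt b, ?_⟩
  refine ⟨⟨?_⟩, BMAux.Phi_injective hT l hd hFt b⟩
  set Φ := BMAux.Phi hT l hd hFt b with hΦ
  set tB : TopologicalSpace ((n : ℕ) → Equiv.Perm (Delta d n)) :=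
    @Pi.topologicalSpace ℕ (fun n => Equiv.Perm (Delta d n)) (fun _ => ⊥) with htB
  set tP : TopologicalSpace (Equiv.Perm V) := permTop V with htP
  set tS : TopologicalSpace ↥(Ustab T l F b) :=
    TopologicalSpace.induced Subtype.val tP with htS
  show tS = TopologicalSpace.induced (⇑Φ) tB
  have hval : @Continuous _ _ tS tP Subtype.val := continuous_induced_dom
  have hcoe : @Continuous _ _ tP Pi.topologicalSpace
      (fun g : Equiv.Perm V => (g : V → V)) := continuous_induced_dom
  refine le_antisymm ?_ ?_
  · rw [← continuous_iff_le_induced]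
    apply continuous_pi
    intro n
    rw [continuous_discrete_rng]
    intro π
    have hset : ((fun g => Φ g n) ⁻¹' {π}) = ⋂ ω : Delta d n,
        ((fun g : ↥(Ustab T l F b) => ((g : Equiv.Perm V) : V → V)
          (BMAux.node l hd hFt b n ω)) ⁻¹'
          {BMAux.node l hd hFt b n (π ω)}) := by
      ext g
      simp only [Set.mem_preimage, Set.mem_singleton_iff, Set.mem_iInter]
      exact BMAux.Phi_coord_eq_iff hT l hd hFt b g n π
    rw [hset]
    apply isOpen_iInter_of_finite
    intro ω
    exact (((continuous_apply _).comp hcoe).comp hval).isOpen_preimage _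
      (isOpen_discrete _)
  · show TopologicalSpace.induced (⇑Φ) tB ≤ tS
    rw [htS, htP]
    have hperm : permTop V = TopologicalSpace.induced
        (fun g : Equiv.Perm V => (g : V → V)) (Pi.topologicalSpace) := rfl
    rw [hperm, induced_compose]
    have hpi : (Pi.topologicalSpace : TopologicalSpace (V → V)) =
        ⨅ v : V, TopologicalSpace.induced (fun h : V → V => h v) ⊥ := rfl
    rw [hpi, induced_iInf]
    refine le_iInf fun v => ?_
    rw [induced_compose]
    rcases BMAux.vertex_decomp hT l hd hFt b v with hv | ⟨n, ω, hv⟩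
    · have heq : ((fun h : V → V => h v) ∘
          ((fun g : Equiv.Perm V => (g : V → V)) ∘
            (Subtype.val : ↥(Ustab T l F b) → Equiv.Perm V))) = fun _ => b := by
        funext g
        show (g : Equiv.Perm V) v = b
        rw [hv]
        exact BMAux.Ustab_fix l b g
      rw [heq, induced_const]
      exact le_top
    · have heq : ((fun h : V → V => h v) ∘
          ((fun g : Equiv.Perm V => (g : V → V)) ∘
            (Subtype.val : ↥(Ustab T l F b) → Equiv.Perm V))) =
          ((fun fn : (n : ℕ) → Equiv.Perm (Delta d n) =>
            BMAux.node l hd hFt b n (fn n ω)) ∘ ⇑Φ) := by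
        funext g
        show (g : Equiv.Perm V) v = BMAux.node l hd hFt b n (Φ g n ω)
        rw [hv]
        exact BMAux.Phi_spec hT l hd hFt b g n ω
      rw [heq, ← induced_compose]
      apply induced_mono
      have h1 : Continuous (fun p : (m : ℕ) → Equiv.Perm (Delta d m) => p n) :=
        continuous_apply n
      have h2 : Continuous (fun π : Equiv.Perm (Delta d n) =>
          BMAux.node l hd hFt b n (π ω)) := continuous_of_discreteTopology
      have hcont : Continuous (fun fn : (n : ℕ) → Equiv.Perm (Delta d n) =>
          BMAux.node l hd hFt b n (fn n ω)) := h2.comp h1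
      exact continuous_iff_le_induced.mp hcont
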